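/- Let Ω ⊂ ℝ^d be bounded, u ∈ L^∞(Ω) with inf_Ω u > 0, q ∈ L²(Ω) ∩ L^∞(Ω) with ‖q‖_{L²} = 1 and ∫_Ω q > 0, and α = (ess inf q + ess sup q)/2. Then for all a ∈ L²(Ω) with ‖a‖_{L²} ≤ 1 and all b ∈ L²(Ω) with ‖b‖_{L²} = 1 and ⟨b,q⟩_{L²} = 0, the quantity L_α(a,b) := ∫_Ω (b(y) − (∫_Ω b / ∫_Ω q) q(y)) ((q(y) − α)/u(y)) a(y) dy satisfies |L_α(a,b)| ≤ (|Ω| / (∫_Ω q)²) · (ess sup q − ess inf q) / (2 inf_Ω u). -/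

import Mathlib

open MeasureTheory
open scoped ENNReal

lemma myMulInt {X : Type*} [MeasurableSpace X] {μ : Measure X} {f g : X → ℝ}
    (hf : MemLp f 2 μ) (hg : MemLp g 2 μ) : Integrable (fun x => f x * g x) μ := by
  have h : (1 : ℝ≥0∞) / 1 = 1 / 2 + 1 / 2 := by
    rw [ENNReal.div_add_div_same]; norm_num
    exact (ENNReal.div_self (by norm_num) (by norm_num)).symm
  have := hg.smul (r := 1) hf
  rw [memLp_one_iff_integrable] at this
  exact this

lemma myCS {X : Type*} [MeasurableSpace X] {μ : Measure X} {f g : X → ℝ}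
    (hf : MemLp f 2 μ) (hg : MemLp g 2 μ) :
    ∫ x, |f x * g x| ∂μ ≤
      Real.sqrt (∫ x, f x ^ 2 ∂μ) * Real.sqrt (∫ x, g x ^ 2 ∂μ) := by
  have hf2 : Integrable (fun x => f x ^ 2) μ := hf.integrable_sq
  have hg2 : Integrable (fun x => g x ^ 2) μ := hg.integrable_sq
  have hfg : Integrable (fun x => |f x * g x|) μ := (myMulInt hf hg).abs
  have key : ∀ t : ℝ, 0 ≤ (∫ x, f x ^ 2 ∂μ) * (t * t) + (2 * ∫ x, |f x * g x| ∂μ) * t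
      + ∫ x, g x ^ 2 ∂μ := by
    intro t
    have h1 : ∀ x, (t * |f x| + |g x|) ^ 2
        = t * t * f x ^ 2 + 2 * t * |f x * g x| + g x ^ 2 := by
      intro x
      rw [abs_mul]
      have := abs_mul_abs_self (f x)
      have := abs_mul_abs_self (g x)
      ring_nf
      nlinarith [abs_mul_abs_self (f x), abs_mul_abs_self (g x)]
    have h0 : 0 ≤ ∫ x, (t * |f x| + |g x|) ^ 2 ∂μ :=
      integral_nonneg fun x => sq_nonneg _
    calc (0:ℝ) ≤ ∫ x, (t * |f x| + |g x|) ^ 2 ∂μ := h0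
      _ = ∫ x, (t * t * f x ^ 2 + 2 * t * |f x * g x| + g x ^ 2) ∂μ := by
          exact integral_congr_ae (Filter.Eventually.of_forall fun x => h1 x)
      _ = (∫ x, f x ^ 2 ∂μ) * (t * t) + (2 * ∫ x, |f x * g x| ∂μ) * t
          + ∫ x, g x ^ 2 ∂μ := by
          have e1 : ∫ x, (t * t * f x ^ 2 + 2 * t * |f x * g x| + g x ^ 2) ∂μ
              = (∫ x, (t * t * f x ^ 2 + 2 * t * |f x * g x|) ∂μ) + ∫ x, g x ^ 2 ∂μ :=
            integral_add ((hf2.const_mul _).add (hfg.const_mul _)) hg2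
          have e2 : ∫ x, (t * t * f x ^ 2 + 2 * t * |f x * g x|) ∂μ
              = (∫ x, t * t * f x ^ 2 ∂μ) + ∫ x, 2 * t * |f x * g x| ∂μ :=
            integral_add (hf2.const_mul _) (hfg.const_mul _)
          rw [e1, e2, integral_const_mul, integral_const_mul]
          ring
  have hd := discrim_le_zero key
  rw [discrim] at hd
  have h2 : (∫ x, |f x * g x| ∂μ) ^ 2 ≤ (∫ x, f x ^ 2 ∂μ) * ∫ x, g x ^ 2 ∂μ := by nlinarith
  have h3 : 0 ≤ ∫ x, |f x * g x| ∂μ := integral_nonneg fun x => abs_nonneg _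
  calc ∫ x, |f x * g x| ∂μ = Real.sqrt ((∫ x, |f x * g x| ∂μ) ^ 2) := by
        rw [Real.sqrt_sq h3]
    _ ≤ Real.sqrt ((∫ x, f x ^ 2 ∂μ) * ∫ x, g x ^ 2 ∂μ) := Real.sqrt_le_sqrt h2
    _ = _ := Real.sqrt_mul (integral_nonneg fun x => sq_nonneg _) _

set_option maxHeartbeats 1000000 in
/-- The key estimate on the quantity `L_α(a,b)` in the construction of the dual certificate
for the internal-measurements problem, with the optimal choice
`α = (ess inf q + ess sup q)/2`. Here `cu` is any positive lower bound of `u` on `Ω`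
(so the statement with `cu = inf_Ω u` is the estimate of the paper). -/
theorem stmt14 {d : ℕ} (Ω : Set (EuclideanSpace ℝ (Fin d)))
    (hΩb : Bornology.IsBounded Ω) (hΩm : MeasurableSet Ω)
    (u q a b : EuclideanSpace ℝ (Fin d) → ℝ)
    (hum : AEStronglyMeasurable u (volume.restrict Ω))
    -- `inf_Ω u > 0`:
    (cu : ℝ) (hcu : 0 < cu) (hcuu : ∀ x ∈ Ω, cu ≤ u x)
    -- `q ∈ L²(Ω) ∩ L^∞(Ω)` with `‖q‖_{L²} = 1` and `∫_Ω q > 0`: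
    (hq : MemLp q 2 (volume.restrict Ω)) (hqi : MemLp q ⊤ (volume.restrict Ω))
    (hq2 : ∫ x, q x ^ 2 ∂(volume.restrict Ω) = 1)
    (hqpos : 0 < ∫ x, q x ∂(volume.restrict Ω))
    -- `‖a‖_{L²} ≤ 1`:
    (ha : MemLp a 2 (volume.restrict Ω)) (ha1 : ∫ x, a x ^ 2 ∂(volume.restrict Ω) ≤ 1)
    -- `‖b‖_{L²} = 1` and `⟨b, q⟩_{L²} = 0`:
    (hb : MemLp b 2 (volume.restrict Ω))
    (hb2 : ∫ x, b x ^ 2 ∂(volume.restrict Ω) = 1)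
    (horth : ∫ x, b x * q x ∂(volume.restrict Ω) = 0)
    (α : ℝ)
    (hα : α = (essInf q (volume.restrict Ω) + essSup q (volume.restrict Ω)) / 2) :
    |∫ y, (b y - ((∫ x, b x ∂(volume.restrict Ω)) / (∫ x, q x ∂(volume.restrict Ω))) * q y)
        * ((q y - α) / u y) * a y ∂(volume.restrict Ω)|
      ≤ ((volume Ω).toReal / (∫ x, q x ∂(volume.restrict Ω)) ^ 2)
        * ((essSup q (volume.restrict Ω) - essInf q (volume.restrict Ω)) / (2 * cu)) := by

  set μ := volume.restrict Ω with hμ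
  have hfin : IsFiniteMeasure μ :=
    ⟨by rw [hμ, Measure.restrict_apply_univ]; exact hΩb.measure_lt_top⟩
  set S := essSup q μ with hS
  set I := essInf q μ with hI
  set m := ∫ x, q x ∂μ with hm
  set B := ∫ x, b x ∂μ with hB
  set β := B / m with hβ
  set V := (volume Ω).toReal with hV
  set M := (S - I) / (2 * cu) with hM
  have hμV : (μ Set.univ).toReal = V := by rw [hμ, Measure.restrict_apply_univ]
  -- μ ≠ 0
  have hμne : μ ≠ 0 := by
    intro h
    rw [hμ] at h
    rw [hm, hμ, h, integral_zero_measure] at hqpos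
    exact lt_irrefl 0 hqpos
  have : (ae μ).NeBot := ae_neBot.mpr hμne
  -- a.e. bounds on q
  have hqbd : ∀ᵐ x ∂μ, |q x| ≤ (eLpNormEssSup q μ).toReal := by
    have h1 : ∀ᵐ x ∂μ, (‖q x‖₊ : ℝ≥0∞) ≤ eLpNormEssSup q μ := ae_le_eLpNormEssSup
    have htop : eLpNormEssSup q μ ≠ ⊤ := by
      have := hqi.2
      rwa [eLpNorm_exponent_top, lt_top_iff_ne_top] at this
    filter_upwards [h1] with x hx
    have := (ENNReal.toReal_le_toReal (by simp) htop).mpr hx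
    simpa [Real.norm_eq_abs] using this
  have hbdd1 : Filter.IsBoundedUnder (· ≤ ·) (ae μ) q := by
    apply Filter.isBoundedUnder_of_eventually_le (a := (eLpNormEssSup q μ).toReal)
    filter_upwards [hqbd] with x hx
    exact le_trans (le_abs_self _) hx
  have hbdd2 : Filter.IsBoundedUnder (· ≥ ·) (ae μ) q := by
    apply Filter.isBoundedUnder_of_eventually_ge (a := -(eLpNormEssSup q μ).toReal)
    filter_upwards [hqbd] with x hx
    exact neg_le_of_abs_le hx
  have hqS : ∀ᵐ x ∂μ, q x ≤ S := ae_le_essSup hbdd1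
  have hIq : ∀ᵐ x ∂μ, I ≤ q x := ae_essInf_le hbdd2
  have hIS : I ≤ S := by
    obtain ⟨x, hx1, hx2⟩ := (hIq.and hqS).exists
    linarith
  have hMpos : 0 ≤ M := by
    rw [hM]; exact div_nonneg (by linarith) (by positivity)
  -- a.e. bound on the weight
  have hu : ∀ᵐ x ∂μ, cu ≤ u x := by
    rw [hμ]
    exact (ae_restrict_iff' hΩm).mpr (Filter.Eventually.of_forall hcuu)
  have hw : ∀ᵐ x ∂μ, |(q x - α) / u x| ≤ M := by
    filter_upwards [hqS, hIq, hu] with x h1 h2 h3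
    have hux : 0 < u x := lt_of_lt_of_le hcu h3
    have hnum : |q x - α| ≤ (S - I) / 2 := by
      rw [hα]
      rw [abs_le]
      constructor <;> [linarith; linarith]
    rw [abs_div, abs_of_pos hux]
    calc |q x - α| / u x ≤ ((S - I) / 2) / cu := by
          apply div_le_div₀ (by linarith) hnum hcu h3
      _ = M := by rw [hM]; ring
  -- the function f
  set f := fun y => b y - β * q y with hf
  have hfL2 : MemLp f 2 μ := hb.sub (hq.const_mul β)
  have hfa : Integrable (fun x => f x * a x) μ := myMulInt hfL2 ha
  -- integrability of products
  have hbq : Integrable (fun x => b x * q x) μ := myMulInt hb hq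
  have hbsq : Integrable (fun x => b x ^ 2) μ := hb.integrable_sq
  have hqsq : Integrable (fun x => q x ^ 2) μ := hq.integrable_sq
  have hbint : Integrable b μ := hb.integrable one_le_two
  have hqint : Integrable q μ := hq.integrable one_le_two
  -- ∫ f² = 1 + β²
  have hf2 : ∫ x, f x ^ 2 ∂μ = 1 + β ^ 2 := by
    have e : ∀ x, f x ^ 2 = b x ^ 2 - 2 * β * (b x * q x) + β ^ 2 * q x ^ 2 := by
      intro x; rw [hf]; ring
    calc ∫ x, f x ^ 2 ∂μ
        = ∫ x, (b x ^ 2 - 2 * β * (b x * q x) + β ^ 2 * q x ^ 2) ∂μ :=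
          integral_congr_ae (Filter.Eventually.of_forall e)
      _ = (∫ x, (b x ^ 2 - 2 * β * (b x * q x)) ∂μ) + ∫ x, β ^ 2 * q x ^ 2 ∂μ :=
          integral_add (hbsq.sub (hbq.const_mul _)) (hqsq.const_mul _)
      _ = ((∫ x, b x ^ 2 ∂μ) - ∫ x, 2 * β * (b x * q x) ∂μ) + ∫ x, β ^ 2 * q x ^ 2 ∂μ := by
          rw [integral_sub hbsq (hbq.const_mul _)]
      _ = 1 + β ^ 2 := by
          rw [integral_const_mul, integral_const_mul, hb2, horth, hq2]; ring
  -- Bessel: B² + m² ≤ V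
  have hBessel : B ^ 2 + m ^ 2 ≤ V := by
    set g := fun x => 1 - B * b x - m * q x with hg
    have e : ∀ x, g x ^ 2 = 1 - 2 * B * b x - 2 * m * q x + 2 * (B * m) * (b x * q x)
        + B ^ 2 * b x ^ 2 + m ^ 2 * q x ^ 2 := by
      intro x; rw [hg]; ring
    have h0 : 0 ≤ ∫ x, g x ^ 2 ∂μ := integral_nonneg fun x => sq_nonneg _
    have hval : ∫ x, g x ^ 2 ∂μ = V - B ^ 2 - m ^ 2 := by
      have e1 : ∫ x, (1 - 2 * B * b x - 2 * m * q x + 2 * (B * m) * (b x * q x)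
            + B ^ 2 * b x ^ 2 + m ^ 2 * q x ^ 2) ∂μ
          = (∫ x, (1 - 2 * B * b x - 2 * m * q x + 2 * (B * m) * (b x * q x)
            + B ^ 2 * b x ^ 2) ∂μ) + ∫ x, m ^ 2 * q x ^ 2 ∂μ :=
        integral_add (((((integrable_const 1).sub (hbint.const_mul _)).sub
          (hqint.const_mul _)).add (hbq.const_mul _)).add (hbsq.const_mul _))
          (hqsq.const_mul _)
      have e2 : ∫ x, (1 - 2 * B * b x - 2 * m * q x + 2 * (B * m) * (b x * q x)
            + B ^ 2 * b x ^ 2) ∂μ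
          = (∫ x, (1 - 2 * B * b x - 2 * m * q x + 2 * (B * m) * (b x * q x)) ∂μ)
            + ∫ x, B ^ 2 * b x ^ 2 ∂μ :=
        integral_add ((((integrable_const 1).sub (hbint.const_mul _)).sub
          (hqint.const_mul _)).add (hbq.const_mul _)) (hbsq.const_mul _)
      have e3 : ∫ x, (1 - 2 * B * b x - 2 * m * q x + 2 * (B * m) * (b x * q x)) ∂μ
          = (∫ x, (1 - 2 * B * b x - 2 * m * q x) ∂μ)
            + ∫ x, 2 * (B * m) * (b x * q x) ∂μ :=
        integral_add (((integrable_const 1).sub (hbint.const_mul _)).sub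
          (hqint.const_mul _)) (hbq.const_mul _)
      have e4 : ∫ x, (1 - 2 * B * b x - 2 * m * q x) ∂μ
          = (∫ x, (1 - 2 * B * b x) ∂μ) - ∫ x, 2 * m * q x ∂μ :=
        integral_sub ((integrable_const 1).sub (hbint.const_mul _)) (hqint.const_mul _)
      have e5 : ∫ x, (1 - 2 * B * b x) ∂μ
          = (∫ x, (1:ℝ) ∂μ) - ∫ x, 2 * B * b x ∂μ :=
        integral_sub (integrable_const 1) (hbint.const_mul _)
      calc ∫ x, g x ^ 2 ∂μ
          = ∫ x, (1 - 2 * B * b x - 2 * m * q x + 2 * (B * m) * (b x * q x)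
              + B ^ 2 * b x ^ 2 + m ^ 2 * q x ^ 2) ∂μ :=
            integral_congr_ae (Filter.Eventually.of_forall e)
        _ = V - B ^ 2 - m ^ 2 := by
            rw [e1, e2, e3, e4, e5, integral_const, integral_const_mul, integral_const_mul,
              integral_const_mul, integral_const_mul, integral_const_mul, horth, hb2, hq2,
              ← hB, ← hm]
            simp only [smul_eq_mul, mul_one, measureReal_def, hμV]
            ring
    linarith [hval ▸ h0]
  have hm2V : m ^ 2 ≤ V := by nlinarith [sq_nonneg B]
  have hmpos : 0 < m := hqpos
  set K := V / m ^ 2 with hK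
  have hK1 : 1 ≤ K := by
    rw [hK, le_div_iff₀ (by positivity)]
    linarith
  have hfK : ∫ x, f x ^ 2 ∂μ ≤ K := by
    rw [hf2, hK, hβ, le_div_iff₀ (by positivity), div_pow]
    have : B ^ 2 / m ^ 2 * m ^ 2 = B ^ 2 := by field_simp
    nlinarith [this]
  -- main chain
  have step1 : |∫ y, f y * ((q y - α) / u y) * a y ∂μ|
      ≤ ∫ y, |f y * ((q y - α) / u y) * a y| ∂μ := by
    simpa only [Real.norm_eq_abs] using
      norm_integral_le_integral_norm (fun y => f y * ((q y - α) / u y) * a y) (μ := μ)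
  have step2 : ∫ y, |f y * ((q y - α) / u y) * a y| ∂μ ≤ ∫ y, |f y * a y| * M ∂μ := by
    apply integral_mono_of_nonneg (Filter.Eventually.of_forall fun y => abs_nonneg _)
      (hfa.abs.mul_const M)
    filter_upwards [hw] with y hy
    calc |f y * ((q y - α) / u y) * a y| = |f y * a y| * |(q y - α) / u y| := by
          rw [abs_mul, abs_mul, abs_mul]; ring
      _ ≤ |f y * a y| * M := mul_le_mul_of_nonneg_left hy (abs_nonneg _)
  have step3 : ∫ y, |f y * a y| * M ∂μ = M * ∫ y, |f y * a y| ∂μ := by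
    rw [integral_mul_const]; ring
  have step4 : ∫ y, |f y * a y| ∂μ ≤ Real.sqrt K := by
    calc ∫ y, |f y * a y| ∂μ
        ≤ Real.sqrt (∫ x, f x ^ 2 ∂μ) * Real.sqrt (∫ x, a x ^ 2 ∂μ) := myCS hfL2 ha
      _ ≤ Real.sqrt K * 1 := by
          apply mul_le_mul (Real.sqrt_le_sqrt hfK) (Real.sqrt_le_one.mpr ha1)
            (Real.sqrt_nonneg _) (Real.sqrt_nonneg _)
      _ = Real.sqrt K := mul_one _
  have hsqrtK : Real.sqrt K ≤ K := by
    have hK0 : (0:ℝ) ≤ K := by linarith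
    have h2 : K ≤ K ^ 2 := by nlinarith
    calc Real.sqrt K ≤ Real.sqrt (K ^ 2) := Real.sqrt_le_sqrt h2
      _ = K := Real.sqrt_sq hK0
  calc |∫ y, f y * ((q y - α) / u y) * a y ∂μ|
      ≤ ∫ y, |f y * ((q y - α) / u y) * a y| ∂μ := step1
    _ ≤ ∫ y, |f y * a y| * M ∂μ := step2
    _ = M * ∫ y, |f y * a y| ∂μ := step3
    _ ≤ M * Real.sqrt K := mul_le_mul_of_nonneg_left step4 hMpos
    _ ≤ M * K := mul_le_mul_of_nonneg_left hsqrtK hMpos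
    _ = K * M := mul_comm _ _
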